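/- Let (Y_i)_{0≤i≤n} be a martingale with Y_0 deterministic, whose differences d_i = Y_i − Y_{i−1} decompose as d_i = W_i + Z_i where W_i is F_{i−1}-measurable and 0 ≤ Z_i ≤ 1 a.s. Then Var[Y_n] ≤ ∑_{i=1}^n E[Z_i]. In particular, if Y_n is a nonnegative integer-valued random variable equal to the number of indices i with Z_i > 0 and E[Z_i | F_{i−1}] equals the conditional probability that Z_i > 0, then Var[Y_n] ≤ E[Y_n]. -/

import Mathlib

open MeasureTheory ProbabilityTheory

section SBVAux
variable {Ω : Type*} {m0 : MeasurableSpace Ω} {μ : Measure Ω}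

private lemma sbv_mul_int {f g : Ω → ℝ} (hf : MemLp f 2 μ) (hg : MemLp g 2 μ) :
    Integrable (fun ω => f ω * g ω) μ := by
  exact MemLp.integrable_mul hf hg

private lemma sbv_cross {m : MeasurableSpace Ω} (hm : m ≤ m0) [IsProbabilityMeasure μ]
    {f g : Ω → ℝ} (hfm : StronglyMeasurable[m] f) (hf : MemLp f 2 μ) (hg : MemLp g 2 μ)
    (hcond : μ[g|m] =ᵐ[μ] 0) : ∫ ω, f ω * g ω ∂μ = 0 := by
  have hfg : Integrable (f * g) μ := sbv_mul_int hf hg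
  have hgi : Integrable g μ := hg.integrable one_le_two
  have h1 : μ[f * g|m] =ᵐ[μ] f * μ[g|m] := condExp_mul_of_stronglyMeasurable_left hfm hfg hgi
  have h2 : ∫ ω, f ω * g ω ∂μ = ∫ ω, (μ[f * g|m]) ω ∂μ := (integral_condExp hm).symm
  rw [h2, integral_congr_ae h1]
  have h0 : (f * μ[g|m]) =ᵐ[μ] 0 := by
    filter_upwards [hcond] with ω hω
    simp only [Pi.mul_apply, Pi.zero_apply] at *
    rw [hω, mul_zero]
  rw [integral_congr_ae h0]; simp

end SBVAux

open Classical in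
theorem self_bounding_variance {Ω : Type*} {m0 : MeasurableSpace Ω}
    (μ : Measure Ω) [IsProbabilityMeasure μ] (𝒢 : Filtration ℕ m0)
    (n : ℕ) (Y : ℕ → Ω → ℝ) (W Z : ℕ → Ω → ℝ)
    (hY : Martingale Y 𝒢 μ) (hL2 : ∀ i, MemLp (Y i) 2 μ)
    (c : ℝ) (hY0 : ∀ ω, Y 0 ω = c)
    (hWmeas : ∀ i, 1 ≤ i → StronglyMeasurable[𝒢 (i - 1)] (W i))
    (hZmeas : ∀ i, Measurable (Z i))
    (hZ : ∀ i, ∀ᵐ ω ∂μ, Z i ω ∈ Set.Icc (0 : ℝ) 1)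
    (hdecomp : ∀ i, 1 ≤ i → ∀ ω, Y i ω - Y (i - 1) ω = W i ω + Z i ω) :
    variance (Y n) μ ≤ ∑ i ∈ Finset.Icc 1 n, ∫ ω, Z i ω ∂μ ∧
    ((∀ ω, Y n ω = ∑ i ∈ Finset.Icc 1 n, (if 0 < Z i ω then (1 : ℝ) else 0)) →
      (∀ i, 1 ≤ i → i ≤ n →
        μ[Z i | 𝒢 (i - 1)] =ᵐ[μ]
          μ[fun ω => if 0 < Z i ω then (1 : ℝ) else 0 | 𝒢 (i - 1)]) →
      variance (Y n) μ ≤ ∫ ω, Y n ω ∂μ) := by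
  have hm : ∀ k : ℕ, 𝒢 k ≤ m0 := fun k => 𝒢.le k
  -- martingale differences have zero conditional expectation
  have hDcond : ∀ k : ℕ, μ[fun ω => Y (k+1) ω - Y k ω | 𝒢 k] =ᵐ[μ] 0 := by
    intro k
    have h1 : μ[Y (k+1)|𝒢 k] =ᵐ[μ] Y k := hY.condExp_ae_eq (Nat.le_succ k)
    have h2 : μ[Y k|𝒢 k] =ᵐ[μ] Y k :=
      Filter.EventuallyEq.of_eq (condExp_of_stronglyMeasurable (hm k) (hY.stronglyAdapted k) (hY.integrable k))
    have h3 := condExp_sub (m := 𝒢 k) (μ := μ) (hY.integrable (k+1)) (hY.integrable k)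
    have he : (fun ω => Y (k+1) ω - Y k ω) = Y (k+1) - Y k := rfl
    rw [he]
    filter_upwards [h1, h2, h3] with ω e1 e2 e3
    simp only [Pi.sub_apply, Pi.zero_apply] at *
    rw [e3, e1, e2]; ring
  -- orthogonality of increments: sum-of-squares identity
  have hkey : ∀ k : ℕ, ∫ ω, (Y k ω - c)^2 ∂μ
      = ∑ i ∈ Finset.Icc 1 k, ∫ ω, (Y i ω - Y (i-1) ω)^2 ∂μ := by
    intro k
    induction k with
    | zero => simp [hY0]
    | succ k ih =>
      rw [Finset.sum_Icc_succ_top (by omega : 1 ≤ k+1), ← ih]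
      simp only [Nat.add_sub_cancel]
      have hA : MemLp (fun ω => Y k ω - c) 2 μ := (hL2 k).sub (memLp_const c)
      have hB : MemLp (fun ω => Y (k+1) ω - Y k ω) 2 μ := (hL2 (k+1)).sub (hL2 k)
      have hAB : Integrable (fun ω => (Y k ω - c) * (Y (k+1) ω - Y k ω)) μ :=
        sbv_mul_int hA hB
      have hA2 : Integrable (fun ω => (Y k ω - c)^2) μ := hA.integrable_sq
      have hB2 : Integrable (fun ω => (Y (k+1) ω - Y k ω)^2) μ := hB.integrable_sq
      have hC : Integrable (fun ω => (Y (k+1) ω - Y k ω)^2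
          + 2 * ((Y k ω - c) * (Y (k+1) ω - Y k ω))) μ := hB2.add (hAB.const_mul 2)
      have hcross : ∫ ω, (Y k ω - c) * (Y (k+1) ω - Y k ω) ∂μ = 0 :=
        sbv_cross (hm k) ((hY.stronglyAdapted k).sub stronglyMeasurable_const) hA hB (hDcond k)
      calc ∫ ω, (Y (k+1) ω - c)^2 ∂μ
          = ∫ ω, ((Y k ω - c)^2 + ((Y (k+1) ω - Y k ω)^2
              + 2 * ((Y k ω - c) * (Y (k+1) ω - Y k ω)))) ∂μ :=
            integral_congr_ae (Filter.Eventually.of_forall fun ω => by ring)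
        _ = ∫ ω, (Y k ω - c)^2 ∂μ + (∫ ω, (Y (k+1) ω - Y k ω)^2 ∂μ
              + 2 * ∫ ω, (Y k ω - c) * (Y (k+1) ω - Y k ω) ∂μ) := by
            have hD2 : Integrable (fun ω => 2 * ((Y k ω - c) * (Y (k+1) ω - Y k ω))) μ :=
              hAB.const_mul 2
            rw [integral_add hA2 hC, integral_add hB2 hD2, integral_const_mul]
        _ = ∫ ω, (Y k ω - c)^2 ∂μ + ∫ ω, (Y (k+1) ω - Y k ω)^2 ∂μ := by
            rw [hcross]; ring
  -- Z is in L²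
  have hZ2 : ∀ i, MemLp (Z i) 2 μ := by
    intro i
    refine MemLp.of_bound (hZmeas i).aestronglyMeasurable 1 ?_
    filter_upwards [hZ i] with ω h
    rw [Real.norm_eq_abs, abs_le]
    exact ⟨by linarith [h.1], h.2⟩
  have hZint : ∀ i, Integrable (Z i) μ := fun i => (hZ2 i).integrable one_le_two
  -- each squared increment is bounded by E[Z i]
  have hbound : ∀ i, 1 ≤ i → ∫ ω, (Y i ω - Y (i-1) ω)^2 ∂μ ≤ ∫ ω, Z i ω ∂μ := by
    intro i hi
    obtain ⟨j, rfl⟩ : ∃ j, i = j + 1 := ⟨i - 1, by omega⟩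
    simp only [Nat.add_sub_cancel]
    set E : Ω → ℝ := μ[Z (j+1) | 𝒢 j] with hEdef
    have hEsm : StronglyMeasurable[𝒢 j] E := stronglyMeasurable_condExp
    have hE0 : (fun _ => (0:ℝ)) ≤ᵐ[μ] E :=
      condExp_nonneg (by filter_upwards [hZ (j+1)] with ω h using h.1)
    have hE1 : E ≤ᵐ[μ] fun _ => (1:ℝ) := by
      have h := condExp_mono (m := 𝒢 j) (μ := μ) (hZint (j+1)) (integrable_const (1:ℝ))
        (by filter_upwards [hZ (j+1)] with ω h using h.2)
      rwa [condExp_const (hm j)] at h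
    have hE2 : MemLp E 2 μ := by
      refine MemLp.of_bound ((hEsm.mono (hm j)).aestronglyMeasurable) 1 ?_
      filter_upwards [hE0, hE1] with ω h0 h1
      rw [Real.norm_eq_abs, abs_le]
      exact ⟨by simpa using by linarith [h0], h1⟩
    have hEint : Integrable E μ := integrable_condExp
    -- integrability of W
    have hWint : Integrable (W (j+1)) μ := by
      have h : Integrable (fun ω => Y (j+1) ω - Y j ω - Z (j+1) ω) μ := by
        have := ((hY.integrable (j+1)).sub (hY.integrable j)).sub (hZint (j+1))
        exact this
      exact h.congr (Filter.Eventually.of_forall fun ω =>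
        show Y (j+1) ω - Y j ω - Z (j+1) ω = W (j+1) ω by
          have hd := hdecomp (j+1) (by omega) ω
          simp only [Nat.add_sub_cancel] at hd
          linarith)
    have hWsm : StronglyMeasurable[𝒢 j] (W (j+1)) := by
      have := hWmeas (j+1) (by omega)
      simpa using this
    -- identify W = -E a.e.
    have hW : W (j+1) =ᵐ[μ] fun ω => -E ω := by
      have h3 := condExp_add (m := 𝒢 j) (μ := μ) hWint (hZint (j+1))
      have h4 : μ[W (j+1)|𝒢 j] =ᵐ[μ] W (j+1) :=
        Filter.EventuallyEq.of_eq (condExp_of_stronglyMeasurable (hm j) hWsm hWint)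
      have h5 : μ[W (j+1) + Z (j+1)|𝒢 j] =ᵐ[μ] 0 := by
        have he : (W (j+1) + Z (j+1)) =ᵐ[μ] fun ω => Y (j+1) ω - Y j ω :=
          Filter.Eventually.of_forall fun ω => by
            have hd := hdecomp (j+1) (by omega) ω
            simp only [Nat.add_sub_cancel] at hd
            simp [hd]
        exact (condExp_congr_ae he).trans (hDcond j)
      filter_upwards [h3, h4, h5] with ω e3 e4 e5
      simp only [Pi.add_apply, Pi.zero_apply] at *
      have : E ω = (μ[Z (j+1)|𝒢 j]) ω := rfl
      rw [this]
      linarith [e3, e4, e5]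
    -- the increment equals Z - E a.e.
    have hD : (fun ω => Y (j+1) ω - Y j ω) =ᵐ[μ] fun ω => Z (j+1) ω - E ω := by
      filter_upwards [hW] with ω hω
      have hd := hdecomp (j+1) (by omega) ω
      simp only [Nat.add_sub_cancel] at hd
      rw [hd, hω]; ring
    -- conditional expectation of Z - E is 0
    have hgcond : μ[fun ω => Z (j+1) ω - E ω|𝒢 j] =ᵐ[μ] 0 := by
      have h3 := condExp_sub (m := 𝒢 j) (μ := μ) (hZint (j+1)) hEint
      have h4 : μ[E|𝒢 j] =ᵐ[μ] E :=
        Filter.EventuallyEq.of_eq (condExp_of_stronglyMeasurable (hm j) hEsm hEint)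
      have he : (fun ω => Z (j+1) ω - E ω) = Z (j+1) - E := rfl
      rw [he]
      filter_upwards [h3, h4] with ω e3 e4
      simp only [Pi.sub_apply, Pi.zero_apply] at *
      rw [e3, e4]; ring
    have hcross : ∫ ω, E ω * (Z (j+1) ω - E ω) ∂μ = 0 :=
      sbv_cross (hm j) hEsm hE2 ((hZ2 (j+1)).sub hE2) hgcond
    have hZsq : Integrable (fun ω => Z (j+1) ω ^ 2) μ := (hZ2 (j+1)).integrable_sq
    have hEsq : Integrable (fun ω => E ω ^ 2) μ := hE2.integrable_sq
    have hEZ : Integrable (fun ω => E ω * (Z (j+1) ω - E ω)) μ :=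
      sbv_mul_int hE2 ((hZ2 (j+1)).sub hE2)
    have hEsqnn : 0 ≤ ∫ ω, E ω ^ 2 ∂μ := integral_nonneg fun ω => sq_nonneg _
    have hZZ : ∫ ω, Z (j+1) ω ^ 2 ∂μ ≤ ∫ ω, Z (j+1) ω ∂μ := by
      refine integral_mono_ae hZsq (hZint (j+1)) ?_
      filter_upwards [hZ (j+1)] with ω h
      nlinarith [h.1, h.2]
    calc ∫ ω, (Y (j+1) ω - Y j ω)^2 ∂μ
        = ∫ ω, (Z (j+1) ω - E ω)^2 ∂μ :=
          integral_congr_ae (by filter_upwards [hD] with ω h; rw [h])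
      _ = ∫ ω, (Z (j+1) ω ^ 2 - E ω ^ 2 - 2 * (E ω * (Z (j+1) ω - E ω))) ∂μ :=
          integral_congr_ae (Filter.Eventually.of_forall fun ω => by ring)
      _ = ∫ ω, Z (j+1) ω ^ 2 ∂μ - ∫ ω, E ω ^ 2 ∂μ
            - 2 * ∫ ω, E ω * (Z (j+1) ω - E ω) ∂μ := by
          have hS1 : Integrable (fun ω => Z (j+1) ω ^ 2 - E ω ^ 2) μ := hZsq.sub hEsq
          have hS2 : Integrable (fun ω => 2 * (E ω * (Z (j+1) ω - E ω))) μ := hEZ.const_mul 2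
          rw [integral_sub hS1 hS2, integral_sub hZsq hEsq, integral_const_mul]
      _ ≤ ∫ ω, Z (j+1) ω ∂μ := by rw [hcross]; linarith
  -- variance is at most ∫ (Y n - c)²
  have hvar : variance (Y n) μ ≤ ∫ ω, (Y n ω - c)^2 ∂μ := by
    rw [variance_eq_sub (hL2 n)]
    have hsq : (μ[(Y n)^2] : ℝ) = ∫ ω, (Y n ω)^2 ∂μ :=
      integral_congr_ae (Filter.Eventually.of_forall fun ω => by simp [Pi.pow_apply])
    have hint : Integrable (Y n) μ := (hL2 n).integrable one_le_two
    have h1 : ∫ ω, (Y n ω - c)^2 ∂μ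
        = ∫ ω, (Y n ω)^2 ∂μ - 2*c*∫ ω, Y n ω ∂μ + c^2 := by
      have he : ∀ ω, (Y n ω - c)^2 = ((Y n ω)^2 - 2*c*(Y n ω)) + c^2 := fun ω => by ring
      calc ∫ ω, (Y n ω - c)^2 ∂μ
          = ∫ ω, (((Y n ω)^2 - 2*c*(Y n ω)) + c^2) ∂μ :=
            integral_congr_ae (Filter.Eventually.of_forall fun ω => he ω)
        _ = ∫ ω, (Y n ω)^2 ∂μ - 2*c*∫ ω, Y n ω ∂μ + c^2 := by
            have hT1 : Integrable (fun ω => (Y n ω)^2 - 2*c*(Y n ω)) μ :=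
              ((hL2 n).integrable_sq).sub (hint.const_mul (2*c))
            have hT2 : Integrable (fun ω => 2*c*(Y n ω)) μ := hint.const_mul (2*c)
            rw [integral_add hT1 (integrable_const _), integral_sub ((hL2 n).integrable_sq)
              hT2, integral_const_mul, integral_const]
            simp [measure_univ]
    rw [h1, hsq]
    nlinarith [sq_nonneg ((∫ ω, Y n ω ∂μ) - c)]
  -- first conjunct
  have hmain : variance (Y n) μ ≤ ∑ i ∈ Finset.Icc 1 n, ∫ ω, Z i ω ∂μ := by
    calc variance (Y n) μ ≤ ∫ ω, (Y n ω - c)^2 ∂μ := hvar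
      _ = ∑ i ∈ Finset.Icc 1 n, ∫ ω, (Y i ω - Y (i-1) ω)^2 ∂μ := hkey n
      _ ≤ ∑ i ∈ Finset.Icc 1 n, ∫ ω, Z i ω ∂μ := by
          refine Finset.sum_le_sum fun i hi => ?_
          exact hbound i (Finset.mem_Icc.mp hi).1
  refine ⟨hmain, fun h1 h2 => ?_⟩
  -- second conjunct
  have hindint : ∀ i, Integrable (fun ω => if 0 < Z i ω then (1:ℝ) else 0) μ := by
    intro i
    refine Integrable.mono' (integrable_const (1:ℝ))
      ((Measurable.ite (measurableSet_lt measurable_const (hZmeas i)) measurable_const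
        measurable_const).aestronglyMeasurable)
      (Filter.Eventually.of_forall fun ω => ?_)
    by_cases h : 0 < Z i ω <;> simp [h]
  have heq : ∀ i ∈ Finset.Icc 1 n,
      ∫ ω, Z i ω ∂μ = ∫ ω, (if 0 < Z i ω then (1:ℝ) else 0) ∂μ := by
    intro i hi
    rw [Finset.mem_Icc] at hi
    have e1 : ∫ ω, (μ[Z i|𝒢 (i-1)]) ω ∂μ = ∫ ω, Z i ω ∂μ := integral_condExp (hm (i-1))
    have e2 : ∫ ω, (μ[fun ω => if 0 < Z i ω then (1:ℝ) else 0|𝒢 (i-1)]) ω ∂μ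
        = ∫ ω, (if 0 < Z i ω then (1:ℝ) else 0) ∂μ := integral_condExp (hm (i-1))
    rw [← e1, ← e2, integral_congr_ae (h2 i hi.1 hi.2)]
  have hYn : ∫ ω, Y n ω ∂μ
      = ∑ i ∈ Finset.Icc 1 n, ∫ ω, (if 0 < Z i ω then (1:ℝ) else 0) ∂μ := by
    calc ∫ ω, Y n ω ∂μ
        = ∫ ω, ∑ i ∈ Finset.Icc 1 n, (if 0 < Z i ω then (1:ℝ) else 0) ∂μ := by
          simp_rw [h1]
      _ = ∑ i ∈ Finset.Icc 1 n, ∫ ω, (if 0 < Z i ω then (1:ℝ) else 0) ∂μ :=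
          integral_finset_sum _ fun i _ => hindint i
  calc variance (Y n) μ ≤ ∑ i ∈ Finset.Icc 1 n, ∫ ω, Z i ω ∂μ := hmain
    _ = ∑ i ∈ Finset.Icc 1 n, ∫ ω, (if 0 < Z i ω then (1:ℝ) else 0) ∂μ :=
        Finset.sum_congr rfl heq
    _ = ∫ ω, Y n ω ∂μ := hYn.symm
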